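/- If A ∈ ℝ^{m×n} is semipositive, X ∈ ℝ^{m×m} is row positive (entrywise nonnegative with at least one positive entry in each row), and Y ∈ ℝ^{n×n} is inverse nonnegative (invertible with entrywise nonnegative inverse), then XAY is semipositive. -/
import Mathlib

open scoped Matrix

/-- `A` is semipositive: `Ax > 0` entrywise for some entrywise nonnegative `x`. -/
def Semipositive {m n : ℕ} (A : Matrix (Fin m) (Fin n) ℝ) : Prop :=
  ∃ x : Fin n → ℝ, (∀ j, 0 ≤ x j) ∧ ∀ i, 0 < A.mulVec x i

theorem semipositive_of_rowPositive_mul_invNonneg (m n : ℕ)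
    (A : Matrix (Fin m) (Fin n) ℝ) (X : Matrix (Fin m) (Fin m) ℝ)
    (Y : Matrix (Fin n) (Fin n) ℝ)
    (hA : Semipositive A)
    (hXnonneg : ∀ i j, 0 ≤ X i j) (hXrow : ∀ i, ∃ j, 0 < X i j)
    (hYunit : IsUnit Y) (hYinv : ∀ i j, 0 ≤ Y⁻¹ i j) :
    Semipositive (X * A * Y) := by
  obtain ⟨x, hx, hAx⟩ := hA
  refine ⟨Y⁻¹.mulVec x, fun j => ?_, fun i => ?_⟩
  · simp only [Matrix.mulVec, dotProduct]
    exact Finset.sum_nonneg fun k _ => mul_nonneg (hYinv j k) (hx k)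
  · have hYx : Y.mulVec (Y⁻¹.mulVec x) = x := by
      rw [Matrix.mulVec_mulVec, Matrix.mul_nonsing_inv _ (Matrix.isUnit_iff_isUnit_det Y |>.mp hYunit), Matrix.one_mulVec]
    have : (X * A * Y).mulVec (Y⁻¹.mulVec x) = X.mulVec (A.mulVec x) := by
      rw [← Matrix.mulVec_mulVec, ← Matrix.mulVec_mulVec, hYx]
    rw [this]
    obtain ⟨j, hj⟩ := hXrow i
    simp only [Matrix.mulVec, dotProduct]
    refine Finset.sum_pos' (fun k _ => mul_nonneg (hXnonneg i k) (hAx k).le) ⟨j, Finset.mem_univ j, mul_pos hj (hAx j)⟩
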